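/- arXiv:2512.07240 — 11 statements merged into one kernel-verified Lean document; each statement's English description precedes it below -/
import Mathlib

section
/- A relation r : α → α → Prop is coreflexive (r ≤ Eq) if and only if it is transitive (Relation.Comp r r ≤ r), symmetric (flip r ≤ r), and single-valued (∀ x y y', r x y → r x y' → y = y'). -/
theorem coreflexive_iff_transitive_symmetric_singleValued {α : Type*}
    (r : α → α → Prop) :
    r ≤ (Eq : α → α → Prop) ↔
      (Relation.Comp r r ≤ r ∧ flip r ≤ r ∧
        ∀ x y y', r x y → r x y' → y = y') := by
  constructor
  · intro h
    refine ⟨?_, ?_, ?_⟩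
    · rintro x z ⟨y, hxy, hyz⟩
      rcases h _ _ hxy; exact hyz
    · intro x y hyx
      rcases h _ _ hyx; exact hyx
    · intro x y y' h1 h2
      exact (h _ _ h1).symm.trans (h _ _ h2)
  · rintro ⟨ht, hs, hsv⟩ x y hxy
    have hyx : r y x := hs _ _ hxy
    have hxx : r x x := ht _ _ ⟨y, hxy, hyx⟩
    exact (hsv _ _ _ hxy hxx).symm ▸ rfl
end

section
/- For endorelations r : α → α → Prop and s : β → β → Prop, the product of their reflexive-transitive closures equals the reflexive-transitive closure of the union of the two one-sided products: (Relation.ReflTransGen r) ×ᵣ (Relation.ReflTransGen s) = Relation.ReflTransGen (fun p q => (r p.1 q.1 ∧ p.2 = q.2) ∨ (p.1 = q.1 ∧ s p.2 q.2)). -/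
/-- Product of relations. -/
def prodRel {α α' β β' : Type*} (r : α → α' → Prop) (s : β → β' → Prop) :
    α × β → α' × β' → Prop :=
  fun p q => r p.1 q.1 ∧ s p.2 q.2

theorem prodRel_reflTransGen_eq_reflTransGen_union {α β : Type*}
    (r : α → α → Prop) (s : β → β → Prop) :
    prodRel (Relation.ReflTransGen r) (Relation.ReflTransGen s) =
      Relation.ReflTransGen
        (fun p q => (r p.1 q.1 ∧ p.2 = q.2) ∨ (p.1 = q.1 ∧ s p.2 q.2)) := by
  ext ⟨a, b⟩ ⟨a', b'⟩
  constructor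
  · rintro ⟨ha, hb⟩
    simp only at ha hb
    have h1 : Relation.ReflTransGen
        (fun p q : α × β => (r p.1 q.1 ∧ p.2 = q.2) ∨ (p.1 = q.1 ∧ s p.2 q.2))
        (a, b) (a', b) := by
      induction ha with
      | refl => exact .refl
      | tail _ h ih => exact ih.tail (Or.inl ⟨h, rfl⟩)
    refine h1.trans ?_
    induction hb with
    | refl => exact .refl
    | tail _ h ih => exact ih.tail (Or.inr ⟨rfl, h⟩)
  · intro h
    have key : ∀ q : α × β,
        Relation.ReflTransGen
          (fun p q : α × β => (r p.1 q.1 ∧ p.2 = q.2) ∨ (p.1 = q.1 ∧ s p.2 q.2))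
          (a, b) q →
        Relation.ReflTransGen r a q.1 ∧ Relation.ReflTransGen s b q.2 := by
      intro q hq
      induction hq with
      | refl => exact ⟨.refl, .refl⟩
      | tail _ h ih =>
        rcases h with ⟨h, he⟩ | ⟨he, h⟩
        · exact ⟨ih.1.tail h, he ▸ ih.2⟩
        · exact ⟨he ▸ ih.1, ih.2.tail h⟩
    exact key (a', b') h
end

section
/- Let a : X → S → Prop, b : S → S → Prop, c : S → Y → Prop, d : X → Y → Prop and a' : X' → S' → Prop, b' : S' → S' → Prop, c' : S' → Y' → Prop, d' : X' → Y' → Prop be relations. Then (Relation.Comp (a ×ᵣ a') (Relation.Comp (Relation.ReflTransGen (b ×ᵣ b')) (c ×ᵣ c'))) ⊔ (d ×ᵣ d') ≤ ((Relation.Comp a (Relation.Comp (Relation.ReflTransGen b) c)) ⊔ d) ×ᵣ ((Relation.Comp a' (Relation.Comp (Relation.ReflTransGen b') c')) ⊔ d'), where ⊔ is pointwise disjunction and ≤ is pointwise implication. -/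
lemma rtg_prod {α β : Type*} {b : α → α → Prop} {b' : β → β → Prop} {p q : α × β}
    (h : Relation.ReflTransGen (prodRel b b') p q) :
    Relation.ReflTransGen b p.1 q.1 ∧ Relation.ReflTransGen b' p.2 q.2 := by
  induction h with
  | refl => exact ⟨.refl, .refl⟩
  | tail _ h ih => exact ⟨ih.1.tail h.1, ih.2.tail h.2⟩

theorem trace_prod_le_prod_trace {X S Y X' S' Y' : Type*}
    (a : X → S → Prop) (b : S → S → Prop) (c : S → Y → Prop) (d : X → Y → Prop)
    (a' : X' → S' → Prop) (b' : S' → S' → Prop) (c' : S' → Y' → Prop)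
    (d' : X' → Y' → Prop) :
    (Relation.Comp (prodRel a a')
        (Relation.Comp (Relation.ReflTransGen (prodRel b b')) (prodRel c c'))) ⊔
      (prodRel d d') ≤
    prodRel
      ((Relation.Comp a (Relation.Comp (Relation.ReflTransGen b) c)) ⊔ d)
      ((Relation.Comp a' (Relation.Comp (Relation.ReflTransGen b') c')) ⊔ d') := by
  rintro p q (⟨s, ⟨ha, ha'⟩, t, hb, hc, hc'⟩ | ⟨hd, hd'⟩)
  · obtain ⟨h1, h2⟩ := rtg_prod hb
    exact ⟨Or.inl ⟨_, ha, _, h1, hc⟩, Or.inl ⟨_, ha', _, h2, hc'⟩⟩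
  · exact ⟨Or.inr hd, Or.inr hd'⟩
end

section
/- (Posetal uniformity AU1 of the trace in Rel.) Let f : (S ⊕ X) → (S ⊕ Y) → Prop, g : (T ⊕ X) → (T ⊕ Y) → Prop and r : S → T → Prop. If Relation.Comp f (r ⊕ᵣ (Eq : Y → Y → Prop)) ≤ Relation.Comp (r ⊕ᵣ (Eq : X → X → Prop)) g (pointwise), then trRel f ≤ trRel g. -/
/-- The canonical trace of the monoidal category `(Rel, ⊕, 0)`. -/
def trRel {S X Y : Type*} (f : (S ⊕ X) → (S ⊕ Y) → Prop) : X → Y → Prop :=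
  fun x y =>
    f (Sum.inr x) (Sum.inr y) ∨
    ∃ s t, f (Sum.inr x) (Sum.inl s) ∧
      Relation.ReflTransGen (fun s s' => f (Sum.inl s) (Sum.inl s')) s t ∧
      f (Sum.inl t) (Sum.inr y)

/-- Sum (biproduct) of relations. -/
def sumRel {S T X Y : Type*} (r : S → T → Prop) (q : X → Y → Prop) :
    (S ⊕ X) → (T ⊕ Y) → Prop
  | Sum.inl s, Sum.inl t => r s t
  | Sum.inr x, Sum.inr y => q x y
  | _, _ => False

theorem trRel_uniform_AU1 {S T X Y : Type*}
    (f : (S ⊕ X) → (S ⊕ Y) → Prop) (g : (T ⊕ X) → (T ⊕ Y) → Prop)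
    (r : S → T → Prop)
    (h : Relation.Comp f (sumRel r (Eq : Y → Y → Prop)) ≤
      Relation.Comp (sumRel r (Eq : X → X → Prop)) g) :
    trRel f ≤ trRel g := by
  -- derived facts
  have hXY : ∀ x y, f (Sum.inr x) (Sum.inr y) → g (Sum.inr x) (Sum.inr y) := by
    intro x y hf
    obtain ⟨m, hm, hg⟩ := h (Sum.inr x) (Sum.inr y) ⟨Sum.inr y, hf, rfl⟩
    cases m with
    | inl t => exact absurd hm (by simp [sumRel])
    | inr x' => cases hm; exact hg
  have hXS : ∀ x s t, f (Sum.inr x) (Sum.inl s) → r s t → g (Sum.inr x) (Sum.inl t) := by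
    intro x s t hf hr
    obtain ⟨m, hm, hg⟩ := h (Sum.inr x) (Sum.inl t) ⟨Sum.inl s, hf, hr⟩
    cases m with
    | inl t => exact absurd hm (by simp [sumRel])
    | inr x' => cases hm; exact hg
  have hSS : ∀ s s' t', f (Sum.inl s) (Sum.inl s') → r s' t' →
      ∃ t, r s t ∧ g (Sum.inl t) (Sum.inl t') := by
    intro s s' t' hf hr
    obtain ⟨m, hm, hg⟩ := h (Sum.inl s) (Sum.inl t') ⟨Sum.inl s', hf, hr⟩
    cases m with
    | inl t => exact ⟨t, hm, hg⟩
    | inr x' => exact absurd hm (by simp [sumRel])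
  have hSY : ∀ t y, f (Sum.inl t) (Sum.inr y) →
      ∃ u, r t u ∧ g (Sum.inl u) (Sum.inr y) := by
    intro t y hf
    obtain ⟨m, hm, hg⟩ := h (Sum.inl t) (Sum.inr y) ⟨Sum.inr y, hf, rfl⟩
    cases m with
    | inl u => exact ⟨u, hm, hg⟩
    | inr x' => exact absurd hm (by simp [sumRel])
  have chain : ∀ s t, Relation.ReflTransGen (fun a b => f (Sum.inl a) (Sum.inl b)) s t →
      ∀ u, r t u → ∃ v, r s v ∧
        Relation.ReflTransGen (fun a b => g (Sum.inl a) (Sum.inl b)) v u := by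
    intro s t hst
    induction hst using Relation.ReflTransGen.head_induction_on with
    | refl => intro u hu; exact ⟨u, hu, Relation.ReflTransGen.refl⟩
    | head hstep _ ih =>
        intro u hu
        obtain ⟨v', hv', hchain⟩ := ih u hu
        obtain ⟨v, hv, hg⟩ := hSS _ _ _ hstep hv'
        exact ⟨v, hv, Relation.ReflTransGen.head hg hchain⟩
  intro x y hxy
  rcases hxy with hf | ⟨s, t, h1, h2, h3⟩
  · exact Or.inl (hXY _ _ hf)
  · obtain ⟨u, hu, hg3⟩ := hSY _ _ h3
    obtain ⟨v, hv, hchain⟩ := chain _ _ h2 u hu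
    exact Or.inr ⟨v, u, hXS _ _ _ h1 hv, hchain, hg3⟩
end

section
/- (Posetal uniformity AU2 of the trace in Rel.) Let f : (S ⊕ X) → (S ⊕ Y) → Prop, g : (T ⊕ X) → (T ⊕ Y) → Prop and r : T → S → Prop. If Relation.Comp (r ⊕ᵣ (Eq : X → X → Prop)) f ≤ Relation.Comp g (r ⊕ᵣ (Eq : Y → Y → Prop)) (pointwise), then trRel f ≤ trRel g. -/
theorem trRel_uniform_AU2 {S T X Y : Type*}
    (f : (S ⊕ X) → (S ⊕ Y) → Prop) (g : (T ⊕ X) → (T ⊕ Y) → Prop)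
    (r : T → S → Prop)
    (h : Relation.Comp (sumRel r (Eq : X → X → Prop)) f ≤
      Relation.Comp g (sumRel r (Eq : Y → Y → Prop))) :
    trRel f ≤ trRel g := by
  intro x y hxy
  rcases hxy with hfxy | ⟨s, t, hxs, hst, hty⟩
  · -- direct transition
    obtain ⟨c, hgc, hc⟩ := h (Sum.inr x) (Sum.inr y) ⟨Sum.inr x, rfl, hfxy⟩
    cases c with
    | inl t => exact absurd hc (by simp [sumRel])
    | inr y' =>
      cases hc
      exact Or.inl hgc
  · -- enter the loop
    obtain ⟨c, hgx, hc⟩ := h (Sum.inr x) (Sum.inl s) ⟨Sum.inr x, rfl, hxs⟩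
    obtain ⟨t₀, rfl, hrt₀⟩ : ∃ t₀, c = Sum.inl t₀ ∧ r t₀ s := by
      cases c with
      | inl t₀ => exact ⟨t₀, rfl, hc⟩
      | inr y' => exact absurd hc (by simp [sumRel])
    -- simulate the loop
    have sim : ∀ s' , Relation.ReflTransGen (fun a b => f (Sum.inl a) (Sum.inl b)) s s' →
        ∃ t', Relation.ReflTransGen (fun a b => g (Sum.inl a) (Sum.inl b)) t₀ t' ∧ r t' s' := by
      intro s' hss'
      induction hss' with
      | refl => exact ⟨t₀, Relation.ReflTransGen.refl, hrt₀⟩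
      | tail hbc hfstep ih =>
        obtain ⟨t', htt', hrt'⟩ := ih
        obtain ⟨c, hgc, hc⟩ := h (Sum.inl t') (Sum.inl _) ⟨Sum.inl _, hrt', hfstep⟩
        cases c with
        | inl t'' => exact ⟨t'', htt'.tail hgc, hc⟩
        | inr y' => exact absurd hc (by simp [sumRel])
    obtain ⟨t', htt', hrt'⟩ := sim t hst
    -- exit the loop
    obtain ⟨c, hgc, hc⟩ := h (Sum.inl t') (Sum.inr y) ⟨Sum.inl t, hrt', hty⟩
    cases c with
    | inl _ => exact absurd hc (by simp [sumRel])
    | inr y' =>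
      cases hc
      exact Or.inr ⟨t₀, t', hgx, htt', hgc⟩
end

section
/- (Axiom AT1 of Kleene bicategories holds in Rel.) For any type X, let h : (X ⊕ X) → (X ⊕ X) → Prop be the relation h a b := Sum.elim id id a = Sum.elim id id b (the composite of the codiagonal relation X ⊕ X → X followed by the diagonal relation X → X ⊕ X). Then trRel h ≤ (Eq : X → X → Prop). -/
private lemma rtg_eq {X : Type*} {s t : X} (h : Relation.ReflTransGen (fun a b : X => (a : X) = b) s t) : s = t := by
  induction h with
  | refl => rfl
  | tail _ h ih => exact ih.trans h

theorem trRel_codiag_diag_le_id {X : Type*} :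
    trRel (fun (a b : X ⊕ X) => Sum.elim id id a = Sum.elim id id b) ≤
      (Eq : X → X → Prop) := by
  intro x y h
  rcases h with h | ⟨s, t, h1, h2, h3⟩
  · exact h
  · have hst : s = t := rtg_eq h2
    simp only [Sum.elim_inl, Sum.elim_inr, id_eq] at h1 h3
    exact h1.trans (hst.trans h3)
end

section
/- (Coherence of the ⊕-trace with the product ⊗ in Rel.) Let f : (S ⊕ X) → (S ⊕ Y) → Prop be a relation and Z a type. Define g : ((S × Z) ⊕ (X × Z)) → ((S × Z) ⊕ (Y × Z)) → Prop by: g (Sum.inl (s,z)) (Sum.inl (s',z')) := fSS s s' ∧ z = z'; g (Sum.inl (s,z)) (Sum.inr (y,z')) := fSY s y ∧ z = z'; g (Sum.inr (x,z)) (Sum.inl (s,z')) := fXS x s ∧ z = z'; g (Sum.inr (x,z)) (Sum.inr (y,z')) := fXY x y ∧ z = z'. Then trRel g = (trRel f) ×ᵣ (Eq : Z → Z → Prop). -/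
lemma rtg_prod_eq {S Z : Type*} (r : S → S → Prop) (a b : S × Z) :
    Relation.ReflTransGen (fun p q : S × Z => r p.1 q.1 ∧ p.2 = q.2) a b ↔
      Relation.ReflTransGen r a.1 b.1 ∧ a.2 = b.2 := by
  constructor
  · intro h
    induction h with
    | refl => exact ⟨.refl, rfl⟩
    | tail _ h ih => exact ⟨ih.1.tail h.1, ih.2.trans h.2⟩
  · rintro ⟨h, hz⟩
    obtain ⟨a1, a2⟩ := a
    obtain ⟨b1, b2⟩ := b
    simp only at h hz
    subst hz
    induction h with
    | refl => exact .refl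
    | tail _ h ih => exact ih.tail ⟨h, rfl⟩

theorem trRel_whisker_right {S X Y Z : Type*} (f : (S ⊕ X) → (S ⊕ Y) → Prop) :
    trRel (fun (p : (S × Z) ⊕ (X × Z)) (q : (S × Z) ⊕ (Y × Z)) =>
      match p, q with
      | Sum.inl (s, z), Sum.inl (s', z') => f (Sum.inl s) (Sum.inl s') ∧ z = z'
      | Sum.inl (s, z), Sum.inr (y, z') => f (Sum.inl s) (Sum.inr y) ∧ z = z'
      | Sum.inr (x, z), Sum.inl (s, z') => f (Sum.inr x) (Sum.inl s) ∧ z = z'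
      | Sum.inr (x, z), Sum.inr (y, z') => f (Sum.inr x) (Sum.inr y) ∧ z = z') =
    prodRel (trRel f) (Eq : Z → Z → Prop) := by
  funext ⟨x, z⟩ ⟨y, z'⟩
  simp only [trRel, prodRel, eq_iff_iff]
  constructor
  · rintro (⟨h, rfl⟩ | ⟨⟨s, zs⟩, ⟨t, zt⟩, ⟨h1, rfl⟩, h2, h3, rfl⟩)
    · exact ⟨Or.inl h, rfl⟩
    · obtain ⟨h2, rfl⟩ :=
        (rtg_prod_eq (fun a b => f (Sum.inl a) (Sum.inl b)) _ _).mp h2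
      exact ⟨Or.inr ⟨s, t, h1, h2, h3⟩, rfl⟩
  · rintro ⟨h | ⟨s, t, h1, h2, h3⟩, rfl⟩
    · exact Or.inl ⟨h, rfl⟩
    · exact Or.inr ⟨(s, z), (t, z), ⟨h1, rfl⟩, (rtg_prod_eq (fun a b => f (Sum.inl a) (Sum.inl b)) (s, z) (t, z)).2 ⟨h2, rfl⟩, h3, rfl⟩
end

section
/- (Sliding axiom of the trace in Rel.) Let f : (S ⊕ X) → (T ⊕ Y) → Prop and u : T → S → Prop be relations. Then trRel (Relation.Comp f (u ⊕ᵣ (Eq : Y → Y → Prop))) = trRel (Relation.Comp (u ⊕ᵣ (Eq : X → X → Prop)) f), where the left-hand trace is over S (of a relation (S ⊕ X) → (S ⊕ Y) → Prop) and the right-hand trace is over T (of a relation (T ⊕ X) → (T ⊕ Y) → Prop). -/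
private lemma slide_aux {S T : Type*} (h : S → T → Prop) (u : T → S → Prop)
    (t : T) (s' : S) :
    (∃ s, u t s ∧ Relation.ReflTransGen (fun a b => ∃ c, h a c ∧ u c b) s s') ↔
    (∃ t', Relation.ReflTransGen (fun a b => ∃ c, u a c ∧ h c b) t t' ∧ u t' s') := by
  constructor
  · rintro ⟨s, hts, hst⟩
    induction hst with
    | refl => exact ⟨t, Relation.ReflTransGen.refl, hts⟩
    | tail _ hstep ih =>
      obtain ⟨t₂, htt₂, ht₂⟩ := ih
      obtain ⟨t₁, h1, h2⟩ := hstep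
      exact ⟨t₁, htt₂.tail ⟨_, ht₂, h1⟩, h2⟩
  · rintro ⟨t', htt', ht'⟩
    induction htt' generalizing s' with
    | refl => exact ⟨s', ht', Relation.ReflTransGen.refl⟩
    | tail _ hstep ih =>
      obtain ⟨s₁, h1, h2⟩ := hstep
      obtain ⟨s₀, hts₀, hrt⟩ := ih s₁ h1
      exact ⟨s₀, hts₀, hrt.tail ⟨_, h2, ht'⟩⟩

theorem trRel_sliding {S T X Y : Type*}
    (f : (S ⊕ X) → (T ⊕ Y) → Prop) (u : T → S → Prop) :
    trRel (Relation.Comp f (sumRel u (Eq : Y → Y → Prop))) =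
      trRel (Relation.Comp (sumRel u (Eq : X → X → Prop)) f) := by
  have hL : ∀ (a : S ⊕ X) (b : S ⊕ Y),
      Relation.Comp f (sumRel u (Eq : Y → Y → Prop)) a b ↔
      (match b with
        | Sum.inl s => ∃ t, f a (Sum.inl t) ∧ u t s
        | Sum.inr y => f a (Sum.inr y)) := by
    intro a b
    cases b with
    | inl s =>
      constructor
      · rintro ⟨(t | y), hf, hs⟩
        · exact ⟨t, hf, hs⟩
        · exact absurd hs (by simp [sumRel])
      · rintro ⟨t, hf, hu⟩; exact ⟨Sum.inl t, hf, hu⟩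
    | inr y =>
      constructor
      · rintro ⟨(t | y'), hf, hs⟩
        · exact absurd hs (by simp [sumRel])
        · cases (show y' = y from hs); exact hf
      · intro hf; exact ⟨Sum.inr y, hf, rfl⟩
  have hR : ∀ (a : T ⊕ X) (b : T ⊕ Y),
      Relation.Comp (sumRel u (Eq : X → X → Prop)) f a b ↔
      (match a with
        | Sum.inl t => ∃ s, u t s ∧ f (Sum.inl s) b
        | Sum.inr x => f (Sum.inr x) b) := by
    intro a b
    cases a with
    | inl t =>
      constructor
      · rintro ⟨(s | x), hs, hf⟩
        · exact ⟨s, hs, hf⟩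
        · exact absurd hs (by simp [sumRel])
      · rintro ⟨s, hu, hf⟩; exact ⟨Sum.inl s, hu, hf⟩
    | inr x =>
      constructor
      · rintro ⟨(s | x'), hs, hf⟩
        · exact absurd hs (by simp [sumRel])
        · cases (show x = x' from hs); exact hf
      · intro hf; exact ⟨Sum.inr x, rfl, hf⟩
  funext x y
  apply propext
  simp only [trRel]
  constructor
  · rintro (hxy | ⟨s, s', hxs, hss', hs'y⟩)
    · exact Or.inl ((hR _ _).2 ((hL _ _).1 hxy))
    · right
      obtain ⟨t, hxt, hts⟩ := (hL _ _).1 hxs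
      have hchain : Relation.ReflTransGen
          (fun a b => ∃ c, (fun s t => f (Sum.inl s) (Sum.inl t)) a c ∧ u c b) s s' := by
        refine Relation.ReflTransGen.mono ?_ _ _ hss'
        intro a b hab
        exact (hL _ _).1 hab
      obtain ⟨t', htt', ht's'⟩ := (slide_aux _ u t s').1 ⟨s, hts, hchain⟩
      refine ⟨t, t', (hR _ _).2 hxt, ?_, (hR _ _).2 ⟨s', ht's', (hL _ _).1 hs'y⟩⟩
      refine Relation.ReflTransGen.mono ?_ _ _ htt'
      intro a b hab
      exact (hR _ _).2 hab
  · rintro (hxy | ⟨t, t', hxt, htt', ht'y⟩)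
    · exact Or.inl ((hL _ _).2 ((hR _ _).1 hxy))
    · right
      obtain ⟨s', ht's', hs'y⟩ := (hR _ _).1 ht'y
      have hchain : Relation.ReflTransGen
          (fun a b => ∃ c, u a c ∧ (fun s t => f (Sum.inl s) (Sum.inl t)) c b) t t' := by
        refine Relation.ReflTransGen.mono ?_ _ _ htt'
        intro a b hab
        exact (hR _ _).1 hab
      obtain ⟨s, hts, hss'⟩ := (slide_aux _ u t s').2 ⟨t', hchain, ht's'⟩
      refine ⟨s, s', (hL _ _).2 ⟨t, (hR _ _).1 hxt, hts⟩, ?_, (hL _ _).2 hs'y⟩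
      refine Relation.ReflTransGen.mono ?_ _ _ hss'
      intro a b hab
      exact (hL _ _).2 hab
end

section
/- (Joining axiom of the trace in Rel.) Let f : (S ⊕ (T ⊕ X)) → (S ⊕ (T ⊕ Y)) → Prop be a relation. Then iterated tracing agrees with tracing over the sum: trRel (trRel f) = trRel (fun a b => f (Equiv.sumAssoc S T X a) (Equiv.sumAssoc S T Y b)), where trRel f : (T ⊕ X) → (T ⊕ Y) → Prop is the trace over S, the outer trRel on the left is the trace over T, the right-hand trace is over S ⊕ T, and Equiv.sumAssoc S T X : (S ⊕ T) ⊕ X ≃ S ⊕ (T ⊕ X) is the canonical associativity equivalence. -/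
namespace TrJoin

variable {S T X Y : Type*} (f : (S ⊕ (T ⊕ X)) → (S ⊕ (T ⊕ Y)) → Prop)

/-- reachability within `S` -/
abbrev SA : S → S → Prop :=
  Relation.ReflTransGen (fun s s' => f (Sum.inl s) (Sum.inl s'))

/-- reachability within `T` through effective steps of the `S`-trace -/
abbrev TE : T → T → Prop :=
  Relation.ReflTransGen (fun t t' => trRel f (Sum.inl t) (Sum.inl t'))

/-- step relation on `S ⊕ T` for the right-hand trace -/
abbrev R : (S ⊕ T) → (S ⊕ T) → Prop := fun u u' =>
  f (Equiv.sumAssoc S T X (Sum.inl u)) (Equiv.sumAssoc S T Y (Sum.inl u'))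

abbrev RR : (S ⊕ T) → (S ⊕ T) → Prop := Relation.ReflTransGen (R f)

lemma L1 {s s' : S} (h : SA f s s') : RR f (Sum.inl s) (Sum.inl s') := by
  induction h with
  | refl => exact Relation.ReflTransGen.refl
  | tail _ st ih =>
      exact ih.tail (by simpa [R, Equiv.sumAssoc_apply_inl_inl] using st)

lemma L2 {t t' : T} (h : trRel f (Sum.inl t) (Sum.inl t')) :
    RR f (Sum.inr t) (Sum.inr t') := by
  rcases h with h | ⟨s, s', hC, hSA, hB⟩
  · exact Relation.ReflTransGen.single (by simpa [R] using h)
  · refine ((Relation.ReflTransGen.single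
      (show R f (Sum.inr t) (Sum.inl s) by simpa [R] using hC)).trans
      (L1 f hSA)).tail ?_
    simpa [R] using hB

lemma L3 {t t' : T} (h : TE f t t') : RR f (Sum.inr t) (Sum.inr t') := by
  induction h with
  | refl => exact Relation.ReflTransGen.refl
  | tail _ st ih => exact ih.trans (L2 f st)

def Q : (S ⊕ T) → (S ⊕ T) → Prop
  | Sum.inl s, Sum.inl s' =>
      SA f s s' ∨ ∃ s1 t t' s2, SA f s s1 ∧ f (Sum.inl s1) (Sum.inr (Sum.inl t)) ∧
        TE f t t' ∧ f (Sum.inr (Sum.inl t')) (Sum.inl s2) ∧ SA f s2 s'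
  | Sum.inl s, Sum.inr t' =>
      ∃ s1 t, SA f s s1 ∧ f (Sum.inl s1) (Sum.inr (Sum.inl t)) ∧ TE f t t'
  | Sum.inr t, Sum.inl s' =>
      ∃ t' s2, TE f t t' ∧ f (Sum.inr (Sum.inl t')) (Sum.inl s2) ∧ SA f s2 s'
  | Sum.inr t, Sum.inr t' => TE f t t'

lemma Q_refl (u : S ⊕ T) : Q f u u := by
  cases u with
  | inl s => exact Or.inl Relation.ReflTransGen.refl
  | inr t => exact Relation.ReflTransGen.refl

lemma Q_tail {u u' u'' : S ⊕ T} (h : Q f u u') (st : R f u' u'') : Q f u u'' := by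
  cases u' with
  | inl s' =>
    cases u'' with
    | inl s'' =>
      have hst : f (Sum.inl s') (Sum.inl s'') := by simpa [R] using st
      cases u with
      | inl s =>
        rcases h with h | ⟨s1, t, t', s2, h1, h2, h3, h4, h5⟩
        · exact Or.inl (h.tail hst)
        · exact Or.inr ⟨s1, t, t', s2, h1, h2, h3, h4, h5.tail hst⟩
      | inr t =>
        rcases h with ⟨t', s2, h1, h2, h3⟩
        exact ⟨t', s2, h1, h2, h3.tail hst⟩
    | inr t'' =>
      have hst : f (Sum.inl s') (Sum.inr (Sum.inl t'')) := by simpa [R] using st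
      cases u with
      | inl s =>
        rcases h with h | ⟨s1, t, t', s2, h1, h2, h3, h4, h5⟩
        · exact ⟨s', t'', h, hst, Relation.ReflTransGen.refl⟩
        · exact ⟨s1, t, h1, h2, h3.tail (Or.inr ⟨s2, s', h4, h5, hst⟩)⟩
      | inr t =>
        rcases h with ⟨t', s2, h1, h2, h3⟩
        exact h1.tail (Or.inr ⟨s2, s', h2, h3, hst⟩)
  | inr t' =>
    cases u'' with
    | inl s'' =>
      have hst : f (Sum.inr (Sum.inl t')) (Sum.inl s'') := by simpa [R] using st
      cases u with
      | inl s =>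
        rcases h with ⟨s1, t, h1, h2, h3⟩
        exact Or.inr ⟨s1, t, t', s'', h1, h2, h3, hst, Relation.ReflTransGen.refl⟩
      | inr t =>
        exact ⟨t', s'', h, hst, Relation.ReflTransGen.refl⟩
    | inr t'' =>
      have hst : f (Sum.inr (Sum.inl t')) (Sum.inr (Sum.inl t'')) := by simpa [R] using st
      cases u with
      | inl s =>
        rcases h with ⟨s1, t, h1, h2, h3⟩
        exact ⟨s1, t, h1, h2, h3.tail (Or.inl hst)⟩
      | inr t =>
        exact h.tail (Or.inl hst)

lemma RR_Q {u u' : S ⊕ T} (h : RR f u u') : Q f u u' := by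
  induction h with
  | refl => exact Q_refl f u
  | tail _ st ih => exact Q_tail f ih st

end TrJoin

theorem trRel_joining {S T X Y : Type*}
    (f : (S ⊕ (T ⊕ X)) → (S ⊕ (T ⊕ Y)) → Prop) :
    trRel (trRel f) =
      trRel (fun (a : (S ⊕ T) ⊕ X) (b : (S ⊕ T) ⊕ Y) =>
        f (Equiv.sumAssoc S T X a) (Equiv.sumAssoc S T Y b)) := by
  funext x y
  apply propext
  constructor
  · intro h
    rcases h with h | ⟨t, t', h1, h2, h3⟩
    · -- no visit to T
      rcases h with h | ⟨s, s', hE, hSA, hX⟩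
      · exact Or.inl (by simpa using h)
      · exact Or.inr ⟨Sum.inl s, Sum.inl s', by simpa using hE,
          TrJoin.L1 f hSA, by simpa using hX⟩
    · -- entry piece
      obtain ⟨u0, e0, p0⟩ : ∃ u0, f (Sum.inr (Sum.inr x)) (Equiv.sumAssoc S T Y (Sum.inl u0)) ∧
          TrJoin.RR f u0 (Sum.inr t) := by
        rcases h1 with h1 | ⟨s, s', a, b, c⟩
        · exact ⟨Sum.inr t, by simpa using h1, Relation.ReflTransGen.refl⟩
        · exact ⟨Sum.inl s, by simpa using a,
            (TrJoin.L1 f b).tail (by simpa [TrJoin.R] using c)⟩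
      obtain ⟨u1, p1, e1⟩ : ∃ u1, TrJoin.RR f (Sum.inr t') u1 ∧
          f (Equiv.sumAssoc S T X (Sum.inl u1)) (Sum.inr (Sum.inr y)) := by
        rcases h3 with h3 | ⟨s2, s3, a, b, c⟩
        · exact ⟨Sum.inr t', Relation.ReflTransGen.refl, by simpa using h3⟩
        · exact ⟨Sum.inl s3,
            (Relation.ReflTransGen.single (show TrJoin.R f (Sum.inr t') (Sum.inl s2) by
              simpa [TrJoin.R] using a)).trans (TrJoin.L1 f b),
            by simpa using c⟩
      exact Or.inr ⟨u0, u1, by simpa using e0,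
        p0.trans ((TrJoin.L3 f h2).trans p1), by simpa using e1⟩
  · intro h
    rcases h with h | ⟨u, u', e0, hp, e1⟩
    · exact Or.inl (Or.inl (by simpa using h))
    · have hq : TrJoin.Q f u u' := TrJoin.RR_Q f hp
      cases u with
      | inl s =>
        have e0' : f (Sum.inr (Sum.inr x)) (Sum.inl s) := by simpa using e0
        cases u' with
        | inl s' =>
          have e1' : f (Sum.inl s') (Sum.inr (Sum.inr y)) := by simpa using e1
          rcases hq with hq | ⟨s1, t, t', s2, q1, q2, q3, q4, q5⟩
          · exact Or.inl (Or.inr ⟨s, s', e0', hq, e1'⟩)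
          · exact Or.inr ⟨t, t', Or.inr ⟨s, s1, e0', q1, q2⟩, q3,
              Or.inr ⟨s2, s', q4, q5, e1'⟩⟩
        | inr t'' =>
          have e1' : f (Sum.inr (Sum.inl t'')) (Sum.inr (Sum.inr y)) := by simpa using e1
          rcases hq with ⟨s1, t, q1, q2, q3⟩
          exact Or.inr ⟨t, t'', Or.inr ⟨s, s1, e0', q1, q2⟩, q3, Or.inl e1'⟩
      | inr t =>
        have e0' : f (Sum.inr (Sum.inr x)) (Sum.inr (Sum.inl t)) := by simpa using e0
        cases u' with
        | inl s' =>
          have e1' : f (Sum.inl s') (Sum.inr (Sum.inr y)) := by simpa using e1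
          rcases hq with ⟨t', s2, q1, q2, q3⟩
          exact Or.inr ⟨t, t', Or.inl e0', q1, Or.inr ⟨s2, s', q2, q3, e1'⟩⟩
        | inr t' =>
          have e1' : f (Sum.inr (Sum.inl t')) (Sum.inr (Sum.inr y)) := by simpa using e1
          exact Or.inr ⟨t, t', Or.inl e0', hq, Or.inl e1'⟩
end

section
/- Define the step relation step : ℕ × ℕ → ℕ × ℕ → Prop by step p q := p.1 = q.1 + 1 ∧ q.2 = p.2 + 1 (decrement the first component, increment the second). Then for all x y z : ℕ, Relation.ReflTransGen step (x, y) (0, z) ↔ z = x + y. In particular the iterative addition program is total and computes addition. -/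
/-- One step of the iterative addition program:
decrement the first component, increment the second. -/
def step : ℕ × ℕ → ℕ × ℕ → Prop := fun p q => p.1 = q.1 + 1 ∧ q.2 = p.2 + 1

lemma step_sum {p q : ℕ × ℕ} (h : step p q) : q.1 + q.2 = p.1 + p.2 := by
  obtain ⟨h1, h2⟩ := h; omega

theorem addition_program_correct (x y z : ℕ) :
    Relation.ReflTransGen step (x, y) (0, z) ↔ z = x + y := by
  constructor
  · intro h
    have : ∀ p q : ℕ × ℕ, Relation.ReflTransGen step p q → q.1 + q.2 = p.1 + p.2 := by
      intro p q h
      induction h with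
      | refl => rfl
      | tail _ hs ih => have := step_sum hs; omega
    have := this _ _ h
    simp at this; omega
  · rintro rfl
    induction x generalizing y with
    | zero => simpa using Relation.ReflTransGen.refl
    | succ n ih =>
      have h1 : step (n + 1, y) (n, y + 1) := ⟨rfl, rfl⟩
      have h2 : Relation.ReflTransGen step (n, y + 1) (0, n + (y + 1)) := ih (y + 1)
      have := (Relation.ReflTransGen.single h1).trans h2
      simpa [Nat.add_comm, Nat.add_left_comm] using this
end

section
/- (Restricting an adjunction along faithful functors.) Let F : C ⥤ D be left adjoint to U : D ⥤ C with unit η and counit ε, and let J : C' ⥤ C and K : D' ⥤ D be faithful functors. Suppose given a function F'o on objects of C' and, for each pair of objects A, B of C', a function F'h : (A ⟶ B) → (F'o A ⟶ F'o B), and similarly U'o and U'h for D', such that for all objects and morphisms: F.obj (J.obj A) = K.obj (F'o A), U.obj (K.obj D₀) = J.obj (U'o D₀), F.map (J.map f) = K.map (F'h f) (modulo the identifications given by the object equalities), and U.map (K.map g) = J.map (U'h g) (modulo the identifications). Suppose moreover that for every object A of C' the unit component η at J.obj A lies in the image of J (i.e. it equals J.map φ, modulo the object identifications, for some φ : A ⟶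 U'o (F'o A) in C'), and dually every counit component ε at K.obj D₀ lies in the image of K. Then F'o together with F'h defines a functor F' : C' ⥤ D', U'o together with U'h defines a functor U' : D' ⥤ C', and F' is left adjoint to U'. -/
open CategoryTheory

set_option maxRecDepth 8000
set_option maxHeartbeats 2000000

theorem restrict_adjunction_along_faithful
    {C D C' D' : Type*} [Category C] [Category D] [Category C'] [Category D']
    (F : C ⥤ D) (U : D ⥤ C) (adj : F ⊣ U)
    (J : C' ⥤ C) (K : D' ⥤ D) [J.Faithful] [K.Faithful]
    (F'o : C' → D') (F'h : ∀ {A B : C'}, (A ⟶ B) → (F'o A ⟶ F'o B))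
    (U'o : D' → C') (U'h : ∀ {D₀ D₁ : D'}, (D₀ ⟶ D₁) → (U'o D₀ ⟶ U'o D₁))
    (hFo : ∀ A : C', F.obj (J.obj A) = K.obj (F'o A))
    (hUo : ∀ D₀ : D', U.obj (K.obj D₀) = J.obj (U'o D₀))
    (hFm : ∀ {A B : C'} (f : A ⟶ B),
      F.map (J.map f) = eqToHom (hFo A) ≫ K.map (F'h f) ≫ eqToHom (hFo B).symm)
    (hUm : ∀ {D₀ D₁ : D'} (g : D₀ ⟶ D₁),
      U.map (K.map g) = eqToHom (hUo D₀) ≫ J.map (U'h g) ≫ eqToHom (hUo D₁).symm)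
    (hη : ∀ A : C', ∃ φ : A ⟶ U'o (F'o A),
      adj.unit.app (J.obj A) ≫
          eqToHom (show U.obj (F.obj (J.obj A)) = J.obj (U'o (F'o A)) by
            rw [hFo A, hUo (F'o A)]) =
        J.map φ)
    (hε : ∀ D₀ : D', ∃ ψ : F'o (U'o D₀) ⟶ D₀,
      eqToHom (show K.obj (F'o (U'o D₀)) = F.obj (U.obj (K.obj D₀)) by
          rw [hUo D₀, hFo (U'o D₀)]) ≫
        adj.counit.app (K.obj D₀) = K.map ψ) :
    ∃ (F' : C' ⥤ D') (U' : D' ⥤ C')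
      (hF : ∀ A, F'.obj A = F'o A) (hU : ∀ D₀, U'.obj D₀ = U'o D₀),
      (∀ {A B : C'} (f : A ⟶ B),
        F'.map f = eqToHom (hF A) ≫ F'h f ≫ eqToHom (hF B).symm) ∧
      (∀ {D₀ D₁ : D'} (g : D₀ ⟶ D₁),
        U'.map g = eqToHom (hU D₀) ≫ U'h g ≫ eqToHom (hU D₁).symm) ∧
      Nonempty (F' ⊣ U') := by

  have hKF : ∀ {A B : C'} (f : A ⟶ B),
      K.map (F'h f) = eqToHom (hFo A).symm ≫ F.map (J.map f) ≫ eqToHom (hFo B) := by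
    intro A B f; rw [hFm f]; simp
  have hJU : ∀ {D₀ D₁ : D'} (g : D₀ ⟶ D₁),
      J.map (U'h g) = eqToHom (hUo D₀).symm ≫ U.map (K.map g) ≫ eqToHom (hUo D₁) := by
    intro D₀ D₁ g; rw [hUm g]; simp
  let F' : C' ⥤ D' :=
    { obj := F'o
      map := F'h
      map_id := by
        intro A; apply K.map_injective; simp [hKF]
      map_comp := by
        intro A B C f g; apply K.map_injective; simp [hKF] }
  let U' : D' ⥤ C' :=
    { obj := U'o
      map := U'h
      map_id := by
        intro D₀; apply J.map_injective; simp [hJU]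
      map_comp := by
        intro D₀ D₁ D₂ f g; apply J.map_injective; simp [hJU] }
  choose φ hφ using hη
  choose ψ hψ using hε
  have hJφ : ∀ A : C', J.map (φ A) =
      adj.unit.app (J.obj A) ≫ eqToHom (by simp [hFo, hUo]) := fun A => (hφ A).symm
  have hKψ : ∀ D₀ : D', K.map (ψ D₀) =
      eqToHom (by simp [hFo, hUo]) ≫ adj.counit.app (K.obj D₀) := fun D₀ => (hψ D₀).symm
  refine ⟨F', U', fun A => rfl, fun D₀ => rfl, by intro A B f; simp [F'], by intro D₀ D₁ g; simp [U'], ⟨Adjunction.mkOfUnitCounit ⟨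
      { app := φ
        naturality := by
          intro A B f
          apply J.map_injective
          have := adj.unit.naturality (J.map f)
          simp only [Functor.comp_map, Functor.id_map] at this
          show J.map ((𝟭 C').map f ≫ φ B) = J.map (φ A ≫ U'h (F'h f))
          rw [Functor.id_map, Functor.map_comp, Functor.map_comp]
          rw [hJφ B, hJφ A, hJU, hKF]
          simp only [Functor.map_comp, eqToHom_map, Category.assoc, eqToHom_trans,
            eqToHom_trans_assoc, eqToHom_refl, Category.id_comp, Category.comp_id]
          rw [reassoc_of% this] },
      { app := ψ
        naturality := by
          intro D₀ D₁ g
          apply K.map_injective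
          have := adj.counit.naturality (K.map g)
          simp only [Functor.comp_map, Functor.id_map] at this
          simp [F', U', hKψ, hKF, hJU, eqToHom_map, this] }, ?_, ?_⟩⟩⟩
  · ext A
    apply K.map_injective
    have := adj.left_triangle_components (J.obj A)
    have h2 := adj.counit.naturality (eqToHom (hFo A))
    simp only [Functor.comp_map, Functor.id_map, eqToHom_map] at h2
    simp [F', U', hKF, hJφ, hKψ, eqToHom_map, h2, reassoc_of% this]
  · ext D₀
    apply J.map_injective
    have := adj.right_triangle_components (K.obj D₀)
    have h2 := adj.unit.naturality (eqToHom (hUo D₀))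
    simp only [Functor.comp_map, Functor.id_map, eqToHom_map] at h2
    have h3 : adj.unit.app (J.obj (U'o D₀)) =
        eqToHom (hUo D₀).symm ≫ adj.unit.app (U.obj (K.obj D₀)) ≫
          eqToHom (by rw [hUo D₀]) := by
      rw [← h2]; simp
    simp [F', U', hJU, hJφ, hKψ, eqToHom_map, h3, this]
end
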